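/- arXiv:2604.25583 — 4 statements merged into one kernel-verified Lean document; each statement's English description precedes it below -/
import Mathlib

section
/- Let q̂ : ℝ^2 → ℂ be measurable, integrable, and satisfy ∫_{ℝ^2} (1+‖ξ‖^2)^2 |q̂(ξ)|^2 dξ < ∞. Define ‖q‖_{H^2} := (2π)^{-2} ( ∫_{ℝ^2} (1+‖ξ‖^2)^2 |q̂(ξ)|^2 dξ )^{1/2} and ‖q‖_{L^2} := (2π)^{-2} ( ∫_{ℝ^2} |q̂(ξ)|^2 dξ )^{1/2}. Then for every z ∈ ℝ^2 and all 0 < k_min ≤ k_max, | (2π)^{-2} ∫_{ℝ^2} q̂(ξ) e^{i⟨z,ξ⟩} dξ − (2π)^{-2} ∫_{k_min ≤ ‖ξ‖ ≤ k_max} q̂(ξ) e^{i⟨z,ξ⟩} dξ | ≤ √π ( k_max^{-1} ‖q‖_{H^2} + k_min ‖q‖_{L^2} ). -/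
open MeasureTheory Set Real

lemma oneD_tail (R : ℝ) (hR : 0 < R) :
    ∫ y in Ioi R, y * ((1 + y ^ 2) ^ 2)⁻¹ = (2 * (1 + R ^ 2))⁻¹ := by
  have hderiv : ∀ x ∈ Ici R, HasDerivAt (fun y : ℝ => -(2 * (1 + y ^ 2))⁻¹)
      (x * ((1 + x ^ 2) ^ 2)⁻¹) x := by
    intro x _
    have h1 : HasDerivAt (fun y : ℝ => 2 * (1 + y ^ 2)) (2 * (2 * x)) x := by
      simpa using ((hasDerivAt_pow 2 x).const_add (1:ℝ)).const_mul (2:ℝ)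
    have hne : (2 : ℝ) * (1 + x ^ 2) ≠ 0 := by positivity
    have h2 : HasDerivAt (fun y : ℝ => -(2 * (1 + y ^ 2))⁻¹)
        (-(-(2 * (2 * x)) / (2 * (1 + x ^ 2)) ^ 2)) x := (h1.inv hne).neg
    convert h2 using 1
    have hx2 : (1 : ℝ) + x ^ 2 ≠ 0 := by positivity
    field_simp
  have hlim : Filter.Tendsto (fun y : ℝ => -(2 * (1 + y ^ 2))⁻¹) Filter.atTop (nhds 0) := by
    rw [show (0:ℝ) = -0 by ring]
    apply Filter.Tendsto.neg
    apply Filter.Tendsto.inv_tendsto_atTop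
    exact Filter.tendsto_atTop_mono (fun y => by nlinarith [sq_nonneg (y-1)] :
      ∀ y:ℝ, y ≤ 2*(1+y^2)) Filter.tendsto_id
  have hpos : ∀ x ∈ Ioi R, 0 ≤ x * ((1 + x ^ 2) ^ 2)⁻¹ := by
    intro x hx
    have : 0 < x := hR.trans hx
    positivity
  have := integral_Ioi_of_hasDerivAt_of_nonneg' hderiv hpos hlim
  rw [this]
  ring

lemma tail_bound_2D (R : ℝ) (hR : 0 < R) :
    (∫ ξ in {ξ : EuclideanSpace ℝ (Fin 2) | R < ‖ξ‖}, ((1 + ‖ξ‖ ^ 2) ^ 2)⁻¹) = π / (1 + R ^ 2) := by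
  have hmeasS : MeasurableSet {ξ : EuclideanSpace ℝ (Fin 2) | R < ‖ξ‖} :=
    measurableSet_lt measurable_const measurable_norm
  set f : ℝ → ℝ := indicator (Ioi R) (fun y => ((1 + y ^ 2) ^ 2)⁻¹) with hf
  have key : ∫ ξ in {ξ : EuclideanSpace ℝ (Fin 2) | R < ‖ξ‖}, ((1 + ‖ξ‖ ^ 2) ^ 2)⁻¹
      = ∫ ξ : EuclideanSpace ℝ (Fin 2), f ‖ξ‖ := by
    rw [← integral_indicator hmeasS]
    apply integral_congr_ae
    filter_upwards with ξ
    by_cases h : R < ‖ξ‖ <;> simp [hf, indicator, h]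
  rw [key, MeasureTheory.integral_fun_norm_addHaar volume f]
  have hfr : Module.finrank ℝ (EuclideanSpace ℝ (Fin 2)) = 2 := finrank_euclideanSpace_fin
  have hball : (volume (Metric.ball (0 : EuclideanSpace ℝ (Fin 2)) 1)).toReal = π := by
    rw [EuclideanSpace.volume_ball]
    simp only [Fintype.card_fin]
    rw [show ((2:ℕ):ℝ)/2 + 1 = 2 by norm_num, Real.Gamma_two]
    rw [ENNReal.toReal_mul]
    simp [ENNReal.toReal_pow, Real.sq_sqrt Real.pi_nonneg, Real.pi_nonneg]
  have hIoi : (∫ y in Ioi (0:ℝ), y ^ (2 - 1) • f y)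
      = (2 * (1 + R ^ 2))⁻¹ := by
    have heq : ∀ y : ℝ, y ^ (2 - 1) • f y
        = indicator (Ioi R) (fun y => y * ((1 + y ^ 2) ^ 2)⁻¹) y := by
      intro y
      by_cases h : y ∈ Ioi R <;> simp [hf, indicator, h, smul_eq_mul]
    simp_rw [heq]
    rw [integral_indicator measurableSet_Ioi, Measure.restrict_restrict measurableSet_Ioi,
      inter_eq_left.mpr (Ioi_subset_Ioi hR.le)]
    exact oneD_tail R hR
  rw [hfr, hIoi, measureReal_def, hball]
  have h1 : (1:ℝ) + R ^ 2 ≠ 0 := by positivity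
  field_simp [smul_eq_mul, nsmul_eq_mul]
  ring_nf
  have h3 : (2:ℝ) + R ^ 2 * 2 ≠ 0 := by positivity
  field_simp
  ring

lemma cs_integral {α : Type*} [MeasurableSpace α] {μ : Measure α}
    {u v : α → ℝ} (hu : ∀ x, 0 ≤ u x) (hv : ∀ x, 0 ≤ v x)
    (hum : AEStronglyMeasurable u μ) (hvm : AEStronglyMeasurable v μ)
    (hu2 : Integrable (fun x => u x ^ 2) μ) (hv2 : Integrable (fun x => v x ^ 2) μ) :
    ∫ x, u x * v x ∂μ ≤ Real.sqrt (∫ x, u x ^ 2 ∂μ) * Real.sqrt (∫ x, v x ^ 2 ∂μ) := by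
  have h2 : (ENNReal.ofReal (2:ℝ)) = 2 := by norm_num
  have hup : MemLp u (ENNReal.ofReal 2) μ := by
    rw [h2]; exact (memLp_two_iff_integrable_sq hum).2 hu2
  have hvp : MemLp v (ENNReal.ofReal 2) μ := by
    rw [h2]; exact (memLp_two_iff_integrable_sq hvm).2 hv2
  have hpq : Real.HolderConjugate 2 2 := ⟨by norm_num, by norm_num, by norm_num⟩
  have := integral_mul_le_Lp_mul_Lq_of_nonneg hpq (ae_of_all _ hu) (ae_of_all _ hv) hup hvp
  simp_rw [Real.rpow_two] at this
  calc ∫ x, u x * v x ∂μ ≤ (∫ x, u x ^ 2 ∂μ) ^ ((1:ℝ)/2) * (∫ x, v x ^ 2 ∂μ) ^ ((1:ℝ)/2) := this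
    _ = _ := by rw [← Real.sqrt_eq_rpow, ← Real.sqrt_eq_rpow]

/-- Two-dimensional wavenumber-truncation error estimate: truncating the
Fourier integral `(2π)^{-2} ∫ q̂(ξ) e^{i⟨z,ξ⟩} dξ` to the annulus `kmin ≤ ‖ξ‖ ≤ kmax`
produces an error at most `√π (kmax⁻¹ ‖q‖_{H²} + kmin ‖q‖_{L²})`. -/
theorem truncation_error_2D (qhat : EuclideanSpace ℝ (Fin 2) → ℂ)
    (hmeas : Measurable qhat) (hint : Integrable qhat)
    (hH2 : Integrable (fun ξ : EuclideanSpace ℝ (Fin 2) => (1 + ‖ξ‖ ^ 2) ^ 2 * ‖qhat ξ‖ ^ 2))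
    (z : EuclideanSpace ℝ (Fin 2)) (kmin kmax : ℝ) (hkmin : 0 < kmin) (hk : kmin ≤ kmax) :
    ‖((2 * Real.pi : ℂ) ^ 2)⁻¹ *
        (∫ ξ, qhat ξ * Complex.exp (Complex.I * ((inner ℝ z ξ : ℝ) : ℂ))) -
      ((2 * Real.pi : ℂ) ^ 2)⁻¹ *
        (∫ ξ in {ξ : EuclideanSpace ℝ (Fin 2) | kmin ≤ ‖ξ‖ ∧ ‖ξ‖ ≤ kmax},
          qhat ξ * Complex.exp (Complex.I * ((inner ℝ z ξ : ℝ) : ℂ)))‖ ≤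
      Real.sqrt Real.pi *
        (kmax⁻¹ * (((2 * Real.pi) ^ 2)⁻¹ *
            Real.sqrt (∫ ξ, (1 + ‖ξ‖ ^ 2) ^ 2 * ‖qhat ξ‖ ^ 2)) +
          kmin * (((2 * Real.pi) ^ 2)⁻¹ * Real.sqrt (∫ ξ, ‖qhat ξ‖ ^ 2))) := by
  have hkmax : 0 < kmax := hkmin.trans_le hk
  set φ : EuclideanSpace ℝ (Fin 2) → ℂ :=
    fun ξ => qhat ξ * Complex.exp (Complex.I * ((inner ℝ z ξ : ℝ) : ℂ)) with hφ
  have hφnorm : ∀ ξ, ‖φ ξ‖ = ‖qhat ξ‖ := by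
    intro ξ
    rw [hφ]
    simp only [norm_mul]
    have : ‖Complex.exp (Complex.I * ((inner ℝ z ξ : ℝ) : ℂ))‖ = 1 := by
      rw [Complex.norm_exp]
      simp [Complex.mul_re]
    rw [this, mul_one]
  have hφmeas : Measurable φ := by
    apply hmeas.mul
    apply Complex.measurable_exp.comp
    exact (Complex.measurable_ofReal.comp (measurable_const.inner measurable_id)).const_mul _
  have hφint : Integrable φ := by
    refine Integrable.mono' hint.norm hφmeas.aestronglyMeasurable (ae_of_all _ fun ξ => ?_)
    rw [hφnorm ξ]
  set S : Set (EuclideanSpace ℝ (Fin 2)) := {ξ | kmin ≤ ‖ξ‖ ∧ ‖ξ‖ ≤ kmax} with hSdef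
  have hS : MeasurableSet S :=
    MeasurableSet.inter (measurableSet_le measurable_const measurable_norm)
      (measurableSet_le measurable_norm measurable_const)
  have hsplit : (∫ ξ, φ ξ) - (∫ ξ in S, φ ξ) = ∫ ξ in Sᶜ, φ ξ := by
    rw [← integral_add_compl hS hφint]; ring
  set A : Set (EuclideanSpace ℝ (Fin 2)) := {ξ | ‖ξ‖ < kmin} with hAdef
  set B : Set (EuclideanSpace ℝ (Fin 2)) := {ξ | kmax < ‖ξ‖} with hBdef
  have hB : MeasurableSet B := measurableSet_lt measurable_const measurable_norm
  have hcompl : Sᶜ = A ∪ B := by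
    ext ξ
    simp only [hSdef, hAdef, hBdef, Set.mem_compl_iff, Set.mem_setOf_eq, Set.mem_union,
      not_and_or, not_le]
  have hgint : Integrable (fun ξ : EuclideanSpace ℝ (Fin 2) => ‖qhat ξ‖) := hint.norm
  have hAB : ∫ ξ in Sᶜ, ‖qhat ξ‖ = (∫ ξ in A, ‖qhat ξ‖) + ∫ ξ in B, ‖qhat ξ‖ := by
    rw [hcompl]
    apply setIntegral_union _ hB hgint.integrableOn hgint.integrableOn
    rw [Set.disjoint_left]
    intro ξ h1 h2
    simp only [hAdef, hBdef, Set.mem_setOf_eq] at h1 h2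
    linarith
  have hsq : Integrable (fun ξ : EuclideanSpace ℝ (Fin 2) => ‖qhat ξ‖ ^ 2) := by
    refine hH2.mono' ((hmeas.norm.pow_const 2).aestronglyMeasurable) (ae_of_all _ fun ξ => ?_)
    rw [Real.norm_of_nonneg (by positivity)]
    nlinarith [norm_nonneg (qhat ξ), sq_nonneg ‖ξ‖, sq_nonneg (‖qhat ξ‖ * ‖ξ‖),
      sq_nonneg (‖qhat ξ‖ * ‖ξ‖ ^ 2)]
  -- volume of A
  have hAball : A = Metric.ball (0 : EuclideanSpace ℝ (Fin 2)) kmin := by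
    ext ξ; simp [hAdef, Metric.mem_ball]
  have hAvol : (volume A).toReal = π * kmin ^ 2 := by
    rw [hAball, EuclideanSpace.volume_ball]
    simp only [Fintype.card_fin]
    rw [show ((2:ℕ):ℝ)/2 + 1 = 2 by norm_num, Real.Gamma_two]
    rw [ENNReal.toReal_mul]
    simp [ENNReal.toReal_pow, Real.sq_sqrt Real.pi_nonneg, Real.pi_nonneg,
      ENNReal.toReal_ofReal hkmin.le]
    ring
  haveI hAfin : IsFiniteMeasure (volume.restrict A) := by
    constructor
    rw [Measure.restrict_apply_univ, hAball]
    exact measure_ball_lt_top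
  -- Step A
  have hL2nonneg : 0 ≤ ∫ ξ, ‖qhat ξ‖ ^ 2 := integral_nonneg fun ξ => sq_nonneg _
  have hstepA : ∫ ξ in A, ‖qhat ξ‖ ≤ Real.sqrt π * kmin * Real.sqrt (∫ ξ, ‖qhat ξ‖ ^ 2) := by
    have hcs := cs_integral (μ := volume.restrict A) (u := fun _ => (1:ℝ))
      (v := fun ξ => ‖qhat ξ‖) (fun _ => zero_le_one) (fun _ => norm_nonneg _)
      aestronglyMeasurable_const hmeas.norm.aestronglyMeasurable
      ((integrable_const (1:ℝ)).congr (ae_of_all _ fun _ => by norm_num)) hsq.integrableOn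
    simp only [one_mul, one_pow] at hcs
    refine hcs.trans ?_
    have e1 : (∫ _ξ in A, (1:ℝ)) = (volume A).toReal := by simp [measureReal_def]
    rw [e1, hAvol]
    have e2 : Real.sqrt (π * kmin ^ 2) = Real.sqrt π * kmin := by
      rw [Real.sqrt_mul Real.pi_nonneg, Real.sqrt_sq hkmin.le]
    rw [e2]
    exact mul_le_mul_of_nonneg_left
      (Real.sqrt_le_sqrt (setIntegral_le_integral hsq (ae_of_all _ fun ξ => sq_nonneg _)))
      (by positivity)
  -- Step B
  have hfB2 : Integrable (fun ξ : EuclideanSpace ℝ (Fin 2) => ((1 + ‖ξ‖ ^ 2) ^ 2)⁻¹) := by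
    have hr4 : (Module.finrank ℝ (EuclideanSpace ℝ (Fin 2)) : ℝ) < 4 := by
      rw [finrank_euclideanSpace_fin]; norm_num
    have h := integrable_rpow_neg_one_add_norm_sq (μ := (volume : Measure (EuclideanSpace ℝ (Fin 2)))) hr4
    have heq : ∀ x : EuclideanSpace ℝ (Fin 2),
        ((1:ℝ) + ‖x‖ ^ 2) ^ ((-4:ℝ)/2) = ((1 + ‖x‖ ^ 2) ^ 2)⁻¹ := by
      intro x
      have h0 : (0:ℝ) ≤ 1 + ‖x‖ ^ 2 := by positivity
      rw [show (-4:ℝ)/2 = -(2:ℝ) by norm_num, Real.rpow_neg h0, Real.rpow_two]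
    simpa only [heq] using h
  have htail : ∫ ξ in B, ((1 + ‖ξ‖ ^ 2) ^ 2)⁻¹ ≤ π / kmax ^ 2 := by
    rw [hBdef, tail_bound_2D kmax hkmax]
    gcongr
    all_goals first | positivity | exact Real.pi_nonneg | nlinarith
  have hH2nonneg : 0 ≤ ∫ ξ, (1 + ‖ξ‖ ^ 2) ^ 2 * ‖qhat ξ‖ ^ 2 :=
    integral_nonneg fun ξ => by positivity
  have hstepB : ∫ ξ in B, ‖qhat ξ‖ ≤
      Real.sqrt π * kmax⁻¹ * Real.sqrt (∫ ξ, (1 + ‖ξ‖ ^ 2) ^ 2 * ‖qhat ξ‖ ^ 2) := by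
    have hcs := cs_integral (μ := volume.restrict B)
      (u := fun ξ => ((1:ℝ) + ‖ξ‖ ^ 2)⁻¹)
      (v := fun ξ => ((1:ℝ) + ‖ξ‖ ^ 2) * ‖qhat ξ‖)
      (fun ξ => by positivity) (fun ξ => by positivity)
      ((measurable_const.add (measurable_norm.pow_const 2)).inv.aestronglyMeasurable)
      (((measurable_const.add (measurable_norm.pow_const 2)).mul hmeas.norm).aestronglyMeasurable)
      (by
        have : ∀ ξ : EuclideanSpace ℝ (Fin 2),
            (((1:ℝ) + ‖ξ‖ ^ 2)⁻¹) ^ 2 = ((1 + ‖ξ‖ ^ 2) ^ 2)⁻¹ := fun ξ => by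
          rw [← inv_pow]
        simp only [this]
        exact hfB2.integrableOn)
      (by
        have : ∀ ξ : EuclideanSpace ℝ (Fin 2),
            (((1:ℝ) + ‖ξ‖ ^ 2) * ‖qhat ξ‖) ^ 2 = (1 + ‖ξ‖ ^ 2) ^ 2 * ‖qhat ξ‖ ^ 2 := fun ξ => by
          ring
        simp only [this]
        exact hH2.integrableOn)
    have hmul : ∀ ξ : EuclideanSpace ℝ (Fin 2),
        ((1:ℝ) + ‖ξ‖ ^ 2)⁻¹ * (((1:ℝ) + ‖ξ‖ ^ 2) * ‖qhat ξ‖) = ‖qhat ξ‖ := fun ξ => by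
      have : ((1:ℝ) + ‖ξ‖ ^ 2) ≠ 0 := by positivity
      field_simp
    simp only [hmul, inv_pow, mul_pow] at hcs
    refine hcs.trans ?_
    have e3 : Real.sqrt (π / kmax ^ 2) = Real.sqrt π * kmax⁻¹ := by
      rw [Real.sqrt_div Real.pi_nonneg, Real.sqrt_sq hkmax.le, div_eq_mul_inv]
    have hle2 : (∫ ξ in B, (1 + ‖ξ‖ ^ 2) ^ 2 * ‖qhat ξ‖ ^ 2) ≤
        ∫ ξ, (1 + ‖ξ‖ ^ 2) ^ 2 * ‖qhat ξ‖ ^ 2 :=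
      setIntegral_le_integral hH2 (ae_of_all _ fun ξ => by positivity)
    calc Real.sqrt (∫ ξ in B, ((1 + ‖ξ‖ ^ 2) ^ 2)⁻¹) *
          Real.sqrt (∫ ξ in B, (1 + ‖ξ‖ ^ 2) ^ 2 * ‖qhat ξ‖ ^ 2)
        ≤ Real.sqrt (π / kmax ^ 2) *
          Real.sqrt (∫ ξ, (1 + ‖ξ‖ ^ 2) ^ 2 * ‖qhat ξ‖ ^ 2) :=
          mul_le_mul (Real.sqrt_le_sqrt htail) (Real.sqrt_le_sqrt hle2)
            (Real.sqrt_nonneg _) (Real.sqrt_nonneg _)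
      _ = _ := by rw [e3]
  -- final assembly
  have hc : ‖((2 * Real.pi : ℂ) ^ 2)⁻¹‖ = ((2 * π) ^ 2)⁻¹ := by
    rw [norm_inv, norm_pow]
    congr 1
    have h2pi : (2 * Real.pi : ℂ) = ((2 * π : ℝ) : ℂ) := by push_cast; ring
    rw [h2pi, Complex.norm_real, Real.norm_eq_abs, abs_of_nonneg (by positivity)]
  rw [← mul_sub, hsplit, norm_mul, hc]
  have hnorm_le : ‖∫ ξ in Sᶜ, φ ξ‖ ≤ (∫ ξ in A, ‖qhat ξ‖) + ∫ ξ in B, ‖qhat ξ‖ := by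
    rw [← hAB]
    refine (norm_integral_le_integral_norm φ).trans_eq ?_
    exact integral_congr_ae (ae_of_all _ fun ξ => hφnorm ξ)
  have hfinal : ((2 * π) ^ 2)⁻¹ * ‖∫ ξ in Sᶜ, φ ξ‖ ≤
      ((2 * π) ^ 2)⁻¹ * ((Real.sqrt π * kmin * Real.sqrt (∫ ξ, ‖qhat ξ‖ ^ 2)) +
        (Real.sqrt π * kmax⁻¹ * Real.sqrt (∫ ξ, (1 + ‖ξ‖ ^ 2) ^ 2 * ‖qhat ξ‖ ^ 2))) := by
    apply mul_le_mul_of_nonneg_left _ (by positivity)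
    exact hnorm_le.trans (add_le_add hstepA hstepB)
  refine hfinal.trans (le_of_eq ?_)
  ring
end

section
/- Let q̂ : ℝ^3 → ℂ be measurable, integrable, and satisfy ∫_{ℝ^3} (1+‖ξ‖^2)^2 |q̂(ξ)|^2 dξ < ∞. Define ‖q‖_{H^2} := (2π)^{-3} ( ∫_{ℝ^3} (1+‖ξ‖^2)^2 |q̂(ξ)|^2 dξ )^{1/2} and ‖q‖_{L^2} := (2π)^{-3} ( ∫_{ℝ^3} |q̂(ξ)|^2 dξ )^{1/2}. Then for every z ∈ ℝ^3 and all 0 < k_min ≤ k_max, | (2π)^{-3} ∫_{ℝ^3} q̂(ξ) e^{i⟨z,ξ⟩} dξ − (2π)^{-3} ∫_{k_min ≤ ‖ξ‖ ≤ k_max} q̂(ξ) e^{i⟨z,ξ⟩} dξ | ≤ 2√π ( k_max^{-1/2} ‖q‖_{H^2} + (√3/3) k_min^{3/2} ‖q‖_{L^2} ). -/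
open MeasureTheory Set Metric



open MeasureTheory Set Metric

local notation "E3" => EuclideanSpace ℝ (Fin 3)

-- Cauchy–Schwarz helper
lemma my_cs {α : Type*} [MeasurableSpace α] (μ : Measure α) (f g : α → ℝ)
    (hf0 : ∀ x, 0 ≤ f x) (hg0 : ∀ x, 0 ≤ g x)
    (hfm : AEStronglyMeasurable f μ) (hgm : AEStronglyMeasurable g μ)
    (hf2 : Integrable (fun x => f x ^ 2) μ) (hg2 : Integrable (fun x => g x ^ 2) μ) :
    ∫ x, f x * g x ∂μ ≤ Real.sqrt (∫ x, f x ^ 2 ∂μ) * Real.sqrt (∫ x, g x ^ 2 ∂μ) := by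
  have hpq : Real.HolderConjugate 2 2 := ⟨by norm_num, by norm_num, by norm_num⟩
  have h2 : (ENNReal.ofReal (2:ℝ)) = 2 := by norm_num
  have hf : MemLp f (ENNReal.ofReal (2:ℝ)) μ := by
    rw [h2]; exact (memLp_two_iff_integrable_sq hfm).mpr hf2
  have hg : MemLp g (ENNReal.ofReal (2:ℝ)) μ := by
    rw [h2]; exact (memLp_two_iff_integrable_sq hgm).mpr hg2
  have := MeasureTheory.integral_mul_le_Lp_mul_Lq_of_nonneg hpq
    (Filter.Eventually.of_forall hf0) (Filter.Eventually.of_forall hg0) hf hg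
  simpa [Real.rpow_two, Real.sqrt_eq_rpow] using this

-- volume of ball in E3
lemma my_volball (r : ℝ) (hr : 0 ≤ r) :
    (volume (Metric.ball (0 : E3) r)).toReal = Real.pi * r ^ 3 * (4 / 3) := by
  rw [EuclideanSpace.volume_ball]
  have hG : Real.Gamma ((Fintype.card (Fin 3) : ℝ) / 2 + 1) = 3 / 4 * Real.sqrt Real.pi := by
    simp only [Fintype.card_fin]
    rw [show ((3:ℕ):ℝ)/2 + 1 = (1/2 + 1) + 1 by norm_num,
      Real.Gamma_add_one (by norm_num), Real.Gamma_add_one (by norm_num),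
      Real.Gamma_one_half_eq]
    ring
  have hsq : Real.sqrt Real.pi ^ 2 = Real.pi := Real.sq_sqrt Real.pi_pos.le
  have hsp : (0:ℝ) < Real.sqrt Real.pi := Real.sqrt_pos.mpr Real.pi_pos
  rw [hG]
  rw [ENNReal.toReal_mul, ENNReal.toReal_pow, ENNReal.toReal_ofReal hr,
    ENNReal.toReal_ofReal (by positivity)]
  simp only [Fintype.card_fin]
  have h3 : Real.sqrt Real.pi ^ 3 = Real.pi * Real.sqrt Real.pi := by
    rw [pow_succ, hsq]
  rw [h3]
  field_simp

lemma my_tail (k : ℝ) (hk : 0 < k) :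
    ∫ x : E3 in {x : E3 | k < ‖x‖}, ‖x‖ ^ (-4 : ℝ) = 4 * Real.pi * k⁻¹ := by
  have hT : MeasurableSet {x : E3 | k < ‖x‖} :=
    measurableSet_lt measurable_const measurable_norm
  set f : ℝ → ℝ := fun r => if k < r then r ^ (-4 : ℝ) else 0 with hf
  have key := MeasureTheory.integral_fun_norm_addHaar (volume : Measure E3) f
  have h1 : ∫ x : E3, f ‖x‖ = ∫ x : E3 in {x : E3 | k < ‖x‖}, ‖x‖ ^ (-4 : ℝ) := by
    rw [← integral_indicator hT]
    refine integral_congr_ae (Filter.Eventually.of_forall fun x => ?_)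
    simp [hf, Set.indicator_apply, Set.mem_setOf_eq]
  have hfr : Module.finrank ℝ E3 = 3 := finrank_euclideanSpace_fin
  rw [h1, hfr] at key
  have h2 : ∫ y in Set.Ioi (0:ℝ), y ^ (3 - 1) • f y = k⁻¹ := by
    have : ∀ y ∈ Set.Ioi (0:ℝ),
        y ^ (3 - 1) • f y = (Set.Ioi k).indicator (fun y : ℝ => y ^ (-2 : ℝ)) y := by
      intro y hy
      simp only [smul_eq_mul, hf, Set.indicator_apply, Set.mem_Ioi]
      by_cases h : k < y
      · simp only [h, if_pos]
        rw [show y ^ (3-1) = y ^ ((2:ℕ):ℝ) by rw [Real.rpow_natCast],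
          ← Real.rpow_add hy.out]
        norm_num
      · simp [h]
    have hset : Set.Ioi (0:ℝ) ∩ Set.Ioi k = Set.Ioi k :=
      Set.inter_eq_right.mpr (fun y (hy : y ∈ Set.Ioi k) => lt_trans hk hy)
    rw [setIntegral_congr_fun measurableSet_Ioi this,
      setIntegral_indicator measurableSet_Ioi, hset,
      integral_Ioi_rpow_of_lt (by norm_num) hk]
    norm_num [Real.rpow_neg_one]
  rw [h2, measureReal_def, my_volball 1 zero_le_one] at key
  rw [key]
  simp only [smul_eq_mul, nsmul_eq_mul]
  push_cast
  ring


/-- Three-dimensional wavenumber-truncation error estimate: truncating the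
Fourier integral `(2π)^{-3} ∫ q̂(ξ) e^{i⟨z,ξ⟩} dξ` to the annulus `kmin ≤ ‖ξ‖ ≤ kmax`
produces an error at most `2√π (kmax^{-1/2} ‖q‖_{H²} + (√3/3) kmin^{3/2} ‖q‖_{L²})`. -/
theorem truncation_error_3D (qhat : EuclideanSpace ℝ (Fin 3) → ℂ)
    (hmeas : Measurable qhat) (hint : Integrable qhat)
    (hH2 : Integrable (fun ξ : EuclideanSpace ℝ (Fin 3) => (1 + ‖ξ‖ ^ 2) ^ 2 * ‖qhat ξ‖ ^ 2))
    (z : EuclideanSpace ℝ (Fin 3)) (kmin kmax : ℝ) (hkmin : 0 < kmin) (hk : kmin ≤ kmax) :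
    ‖((2 * Real.pi : ℂ) ^ 3)⁻¹ *
        (∫ ξ, qhat ξ * Complex.exp (Complex.I * ((inner ℝ z ξ : ℝ) : ℂ))) -
      ((2 * Real.pi : ℂ) ^ 3)⁻¹ *
        (∫ ξ in {ξ : EuclideanSpace ℝ (Fin 3) | kmin ≤ ‖ξ‖ ∧ ‖ξ‖ ≤ kmax},
          qhat ξ * Complex.exp (Complex.I * ((inner ℝ z ξ : ℝ) : ℂ)))‖ ≤
      2 * Real.sqrt Real.pi *
        (kmax ^ (-(1 : ℝ) / 2) * (((2 * Real.pi) ^ 3)⁻¹ *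
            Real.sqrt (∫ ξ, (1 + ‖ξ‖ ^ 2) ^ 2 * ‖qhat ξ‖ ^ 2)) +
          Real.sqrt 3 / 3 * kmin ^ ((3 : ℝ) / 2) *
            (((2 * Real.pi) ^ 3)⁻¹ * Real.sqrt (∫ ξ, ‖qhat ξ‖ ^ 2))) := by
  have hkmax : 0 < kmax := lt_of_lt_of_le hkmin hk
  set A : Set (EuclideanSpace ℝ (Fin 3)) := {ξ | kmin ≤ ‖ξ‖ ∧ ‖ξ‖ ≤ kmax} with hA_def
  set B : Set (EuclideanSpace ℝ (Fin 3)) := {ξ | ‖ξ‖ < kmin} with hB_def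
  set T : Set (EuclideanSpace ℝ (Fin 3)) := {ξ | kmax < ‖ξ‖} with hT_def
  have hA : MeasurableSet A := (measurableSet_le measurable_const measurable_norm).inter
    (measurableSet_le measurable_norm measurable_const)
  have hB : MeasurableSet B := measurableSet_lt measurable_norm measurable_const
  have hT : MeasurableSet T := measurableSet_lt measurable_const measurable_norm
  set g : EuclideanSpace ℝ (Fin 3) → ℂ :=
    fun ξ => qhat ξ * Complex.exp (Complex.I * ((inner ℝ z ξ : ℝ) : ℂ)) with hg_def
  have hgnorm : ∀ ξ, ‖g ξ‖ = ‖qhat ξ‖ := by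
    intro ξ
    have h0 : (Complex.I * ((inner ℝ z ξ : ℝ) : ℂ)).re = 0 := by simp [Complex.mul_re]
    rw [hg_def]
    simp only [norm_mul, Complex.norm_exp, h0, Real.exp_zero, mul_one]
  have hgm : AEStronglyMeasurable g volume := by
    refine (hmeas.mul ?_).aestronglyMeasurable
    exact (Complex.continuous_exp.comp (continuous_const.mul
      (Complex.continuous_ofReal.comp ((continuous_const : Continuous fun _ => z).inner
        continuous_id)))).measurable
  have hgint : Integrable g := Integrable.mono' hint.norm hgm
    (Filter.Eventually.of_forall fun ξ => le_of_eq (hgnorm ξ))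
  have hsplit : (∫ ξ, g ξ) - (∫ ξ in A, g ξ) = ∫ ξ in Aᶜ, g ξ := by
    rw [← integral_add_compl hA hgint]; ring
  have hAc : Aᶜ = B ∪ T := by
    ext ξ
    simp only [hA_def, hB_def, hT_def, Set.mem_compl_iff, Set.mem_setOf_eq, Set.mem_union,
      not_and_or, not_le]
  have hdisj : Disjoint B T := by
    rw [Set.disjoint_left]
    intro ξ h1 h2
    exact absurd (lt_trans h1 (lt_of_le_of_lt hk h2)) (lt_irrefl _)
  have hsum : (∫ ξ in B ∪ T, g ξ) = (∫ ξ in B, g ξ) + ∫ ξ in T, g ξ :=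
    setIntegral_union hdisj hT hgint.integrableOn hgint.integrableOn
  have hc : ‖((2 * Real.pi : ℂ) ^ 3)⁻¹‖ = ((2 * Real.pi) ^ 3)⁻¹ := by
    have h2pi : ((2 * Real.pi : ℝ) : ℂ) = (2 * Real.pi : ℂ) := by push_cast; ring
    rw [norm_inv, norm_pow, ← h2pi, Complex.norm_real, Real.norm_eq_abs,
      abs_of_nonneg (by positivity)]
  -- integrability facts
  have hL2int : Integrable (fun ξ : EuclideanSpace ℝ (Fin 3) => ‖qhat ξ‖ ^ 2) := by
    refine Integrable.mono' hH2 (hmeas.norm.pow_const 2).aestronglyMeasurable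
      (Filter.Eventually.of_forall fun ξ => ?_)
    rw [Real.norm_eq_abs, abs_of_nonneg (by positivity)]
    have h1 : (1:ℝ) ≤ (1 + ‖ξ‖ ^ 2) ^ 2 := by nlinarith [sq_nonneg ‖ξ‖]
    exact le_mul_of_one_le_left (by positivity) h1
  -- bound on B
  have hBball : B = Metric.ball (0 : EuclideanSpace ℝ (Fin 3)) kmin := by
    ext ξ; simp [hB_def, mem_ball_zero_iff]
  have hvolB : (volume B).toReal = Real.pi * kmin ^ 3 * (4 / 3) := by
    rw [hBball, my_volball kmin hkmin.le]
  have hBfin : volume B < ⊤ := by rw [hBball]; exact measure_ball_lt_top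
  have boundB : (∫ ξ in B, ‖qhat ξ‖) ≤
      Real.sqrt (Real.pi * kmin ^ 3 * (4 / 3)) * Real.sqrt (∫ ξ, ‖qhat ξ‖ ^ 2) := by
    have hone : Integrable (fun _ : EuclideanSpace ℝ (Fin 3) => (1:ℝ) ^ 2)
        (volume.restrict B) := by
      simp only [one_pow]
      exact (integrable_const_iff).mpr (Or.inr ⟨by simpa using hBfin⟩)
    have hcs := my_cs (volume.restrict B) (fun _ => (1:ℝ)) (fun ξ => ‖qhat ξ‖)
      (fun _ => zero_le_one) (fun _ => norm_nonneg _) aestronglyMeasurable_const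
      hmeas.norm.aestronglyMeasurable hone hL2int.integrableOn
    simp only [one_mul, one_pow] at hcs
    refine le_trans hcs ?_
    have h1 : (∫ _ in B, (1:ℝ)) = (volume B).toReal := by simp; rfl
    rw [h1, hvolB]
    exact mul_le_mul_of_nonneg_left (Real.sqrt_le_sqrt (setIntegral_le_integral hL2int
      (Filter.Eventually.of_forall fun ξ => by positivity))) (Real.sqrt_nonneg _)
  -- bound on T
  have hw2 : Integrable (fun ξ : E3 => ((1 + ‖ξ‖ ^ 2)⁻¹) ^ 2) := by
    have h := integrable_rpow_neg_one_add_norm_sq (E := E3) (μ := volume) (r := 4)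
      (by rw [finrank_euclideanSpace_fin]; norm_num)
    refine h.congr (Filter.Eventually.of_forall fun ξ => ?_)
    have hp : (0:ℝ) < 1 + ‖ξ‖ ^ 2 := by positivity
    show (1 + ‖ξ‖ ^ 2) ^ ((-4:ℝ)/2) = (1 + ‖ξ‖ ^ 2)⁻¹ ^ 2
    rw [show ((-4:ℝ)/2) = -(2:ℝ) by norm_num, Real.rpow_neg hp.le, Real.rpow_two, inv_pow]
  have hH2' : Integrable (fun ξ : E3 => ((1 + ‖ξ‖ ^ 2) * ‖qhat ξ‖) ^ 2) :=
    hH2.congr (Filter.Eventually.of_forall fun ξ => (mul_pow _ _ 2).symm)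
  have hmaj : IntegrableOn (fun ξ : E3 => ‖ξ‖ ^ (-4:ℝ)) T := by
    refine Integrable.mono' ((hw2.const_mul ((1 + (kmax⁻¹) ^ 2) ^ 2)).integrableOn)
      ((measurable_norm.pow_const _).aestronglyMeasurable) ?_
    rw [ae_restrict_iff' hT]
    refine Filter.Eventually.of_forall fun ξ (hξ : kmax < ‖ξ‖) => ?_
    set s := ‖ξ‖ with hs
    have hspos : 0 < s := lt_trans hkmax hξ
    have h4 : (1:ℝ) ≤ kmax⁻¹ * s := by
      rw [inv_mul_eq_div]; exact (one_le_div hkmax).mpr (le_of_lt hξ)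
    have h3 : (1:ℝ) ≤ (kmax⁻¹) ^ 2 * s ^ 2 := by
      calc (1:ℝ) = 1 ^ 2 := (one_pow 2).symm
        _ ≤ (kmax⁻¹ * s) ^ 2 := pow_le_pow_left₀ zero_le_one h4 2
        _ = (kmax⁻¹) ^ 2 * s ^ 2 := mul_pow _ _ 2
    have hstep : 1 + s ^ 2 ≤ (1 + (kmax⁻¹) ^ 2) * s ^ 2 := by nlinarith
    have hsq : (1 + s ^ 2) ^ 2 ≤ (1 + (kmax⁻¹) ^ 2) ^ 2 * (s ^ 2) ^ 2 := by
      rw [← mul_pow]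
      exact pow_le_pow_left₀ (by positivity) hstep 2
    have hrw : s ^ (-4:ℝ) = ((s ^ 2) ^ 2)⁻¹ := by
      rw [show (-4:ℝ) = -((4:ℕ):ℝ) by norm_num, Real.rpow_neg hspos.le, Real.rpow_natCast]
      congr 1; ring
    rw [Real.norm_eq_abs, abs_of_nonneg (Real.rpow_nonneg hspos.le _), hrw,
      inv_pow (1 + s ^ 2) 2]
    have h1 : (0:ℝ) < (s ^ 2) ^ 2 := by positivity
    have h2 : (0:ℝ) < (1 + s ^ 2) ^ 2 := by positivity
    rw [← div_eq_mul_inv, le_div_iff₀ h2, inv_mul_eq_div, div_le_iff₀ h1]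
    nlinarith [hsq]
  have htailval : (∫ ξ in T, ‖ξ‖ ^ (-4:ℝ)) = 4 * Real.pi * kmax⁻¹ := my_tail kmax hkmax
  have boundT : (∫ ξ in T, ‖qhat ξ‖) ≤
      Real.sqrt (4 * Real.pi * kmax⁻¹) *
        Real.sqrt (∫ ξ, (1 + ‖ξ‖ ^ 2) ^ 2 * ‖qhat ξ‖ ^ 2) := by
    have hcs := my_cs (volume.restrict T) (fun ξ => (1 + ‖ξ‖ ^ 2)⁻¹)
      (fun ξ => (1 + ‖ξ‖ ^ 2) * ‖qhat ξ‖)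
      (fun ξ => by positivity) (fun ξ => by positivity)
      (((measurable_norm.pow_const 2).const_add 1).inv.aestronglyMeasurable)
      ((((measurable_norm.pow_const 2).const_add 1).mul hmeas.norm).aestronglyMeasurable)
      hw2.integrableOn hH2'.integrableOn
    have heq : (∫ ξ in T, ‖qhat ξ‖) =
        ∫ ξ in T, (1 + ‖ξ‖ ^ 2)⁻¹ * ((1 + ‖ξ‖ ^ 2) * ‖qhat ξ‖) := by
      refine integral_congr_ae (Filter.Eventually.of_forall fun ξ => ?_)
      have hp : (1 + ‖ξ‖ ^ 2) ≠ 0 := by positivity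
      field_simp
    rw [heq]
    refine le_trans hcs (mul_le_mul ?_ ?_ (Real.sqrt_nonneg _) (Real.sqrt_nonneg _))
    · refine Real.sqrt_le_sqrt ?_
      rw [← htailval]
      have hptwise : ∀ᵐ ξ ∂volume.restrict T,
          ((1 + ‖ξ‖ ^ 2)⁻¹) ^ 2 ≤ ‖ξ‖ ^ (-4:ℝ) := by
        rw [ae_restrict_iff' hT]
        refine Filter.Eventually.of_forall fun ξ (hξ : kmax < ‖ξ‖) => ?_
        have hspos : 0 < ‖ξ‖ := lt_trans hkmax hξ
        have hrw : ‖ξ‖ ^ (-4:ℝ) = ((‖ξ‖ ^ 2) ^ 2)⁻¹ := by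
          rw [show (-4:ℝ) = -((4:ℕ):ℝ) by norm_num, Real.rpow_neg hspos.le, Real.rpow_natCast]
          congr 1; ring
        have h1 : (‖ξ‖ ^ 2) ^ 2 ≤ (1 + ‖ξ‖ ^ 2) ^ 2 := by nlinarith [sq_nonneg ‖ξ‖]
        calc ((1 + ‖ξ‖ ^ 2)⁻¹) ^ 2 = ((1 + ‖ξ‖ ^ 2) ^ 2)⁻¹ := by rw [inv_pow]
          _ ≤ ((‖ξ‖ ^ 2) ^ 2)⁻¹ := by gcongr
          _ = ‖ξ‖ ^ (-4:ℝ) := hrw.symm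
      exact integral_mono_of_nonneg (Filter.Eventually.of_forall fun ξ => by positivity)
        hmaj hptwise
    · refine Real.sqrt_le_sqrt ?_
      have heq2 : (∫ ξ in T, ((1 + ‖ξ‖ ^ 2) * ‖qhat ξ‖) ^ 2) =
          ∫ ξ in T, (1 + ‖ξ‖ ^ 2) ^ 2 * ‖qhat ξ‖ ^ 2 := by
        refine integral_congr_ae (Filter.Eventually.of_forall fun ξ => mul_pow _ _ 2)
      rw [heq2]
      exact setIntegral_le_integral hH2 (Filter.Eventually.of_forall fun ξ => by positivity)
  -- sqrt identities
  have e1 : Real.sqrt (4 * Real.pi * kmax⁻¹) =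
      2 * Real.sqrt Real.pi * kmax ^ (-(1:ℝ)/2) := by
    have hx : (kmax ^ (-(1:ℝ)/2)) ^ 2 = kmax⁻¹ := by
      rw [← Real.rpow_natCast (kmax ^ (-(1:ℝ)/2)) 2, ← Real.rpow_mul hkmax.le]
      norm_num [Real.rpow_neg_one]
    rw [show 4 * Real.pi * kmax⁻¹ = (2 * Real.sqrt Real.pi * kmax ^ (-(1:ℝ)/2)) ^ 2 by
      rw [mul_pow, mul_pow, Real.sq_sqrt Real.pi_pos.le, hx]; ring]
    exact Real.sqrt_sq (by positivity)
  have e2 : Real.sqrt (Real.pi * kmin ^ 3 * (4/3)) =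
      2 * Real.sqrt Real.pi * (Real.sqrt 3 / 3) * kmin ^ ((3:ℝ)/2) := by
    have hx : (kmin ^ ((3:ℝ)/2)) ^ 2 = kmin ^ 3 := by
      rw [← Real.rpow_natCast (kmin ^ ((3:ℝ)/2)) 2, ← Real.rpow_mul hkmin.le,
        ← Real.rpow_natCast kmin 3]
      norm_num
    rw [show Real.pi * kmin ^ 3 * (4/3) =
        (2 * Real.sqrt Real.pi * (Real.sqrt 3 / 3) * kmin ^ ((3:ℝ)/2)) ^ 2 by
      rw [mul_pow, mul_pow, mul_pow, div_pow, Real.sq_sqrt Real.pi_pos.le,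
        Real.sq_sqrt (by norm_num : (0:ℝ) ≤ 3), hx]; ring]
    exact Real.sqrt_sq (by positivity)
  -- assembly
  have hcpos : (0:ℝ) ≤ ((2 * Real.pi) ^ 3)⁻¹ := by positivity
  calc ‖((2 * Real.pi : ℂ) ^ 3)⁻¹ * (∫ ξ, g ξ) - ((2 * Real.pi : ℂ) ^ 3)⁻¹ * ∫ ξ in A, g ξ‖
      = ((2 * Real.pi) ^ 3)⁻¹ * ‖(∫ ξ in B, g ξ) + ∫ ξ in T, g ξ‖ := by
        rw [← mul_sub, norm_mul, hc, hsplit, hAc, hsum]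
    _ ≤ ((2 * Real.pi) ^ 3)⁻¹ * ((∫ ξ in B, ‖qhat ξ‖) + ∫ ξ in T, ‖qhat ξ‖) := by
        refine mul_le_mul_of_nonneg_left ?_ hcpos
        refine le_trans (norm_add_le _ _) (add_le_add ?_ ?_)
        · refine le_trans (norm_integral_le_integral_norm _) (le_of_eq ?_)
          exact integral_congr_ae (Filter.Eventually.of_forall fun ξ => hgnorm ξ)
        · refine le_trans (norm_integral_le_integral_norm _) (le_of_eq ?_)
          exact integral_congr_ae (Filter.Eventually.of_forall fun ξ => hgnorm ξ)
    _ ≤ ((2 * Real.pi) ^ 3)⁻¹ *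
          ((Real.sqrt (Real.pi * kmin ^ 3 * (4/3)) * Real.sqrt (∫ ξ, ‖qhat ξ‖ ^ 2)) +
            Real.sqrt (4 * Real.pi * kmax⁻¹) *
              Real.sqrt (∫ ξ, (1 + ‖ξ‖ ^ 2) ^ 2 * ‖qhat ξ‖ ^ 2)) := by
        exact mul_le_mul_of_nonneg_left (add_le_add boundB boundT) hcpos
    _ = 2 * Real.sqrt Real.pi *
        (kmax ^ (-(1 : ℝ) / 2) * (((2 * Real.pi) ^ 3)⁻¹ *
            Real.sqrt (∫ ξ, (1 + ‖ξ‖ ^ 2) ^ 2 * ‖qhat ξ‖ ^ 2)) +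
          Real.sqrt 3 / 3 * kmin ^ ((3 : ℝ) / 2) *
            (((2 * Real.pi) ^ 3)⁻¹ * Real.sqrt (∫ ξ, ‖qhat ξ‖ ^ 2))) := by
        rw [e1, e2]; ring
end

section
/- Let n ≥ 1, R > 0, M ≥ 0, and let θ ∈ ℝ^n with ‖θ‖ = 1. Let E = C(closure(B_R), ℂ) with the supremum norm, let T : E → E be a continuous linear operator with ‖T‖ ≤ M, and let k > 0 satisfy k^2 M ≤ 1/2. Suppose u ∈ E satisfies the fixed-point equation u = v + k^2 (T u), where v ∈ E is given by v(x) = e^{ik⟨θ,x⟩}. Then for every x in the closed ball of radius R, | u(x) − (1 + i k ⟨θ,x⟩) | ≤ (R^2/2 + 2M) k^2. In particular, u(x) = 1 + ik θ·x + O(k^2) uniformly on closure(B_R) as k → 0. -/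
open MeasureTheory

instance closedBall_compactSpace (n : ℕ) (R : ℝ) :
    CompactSpace (Metric.closedBall (0 : EuclideanSpace ℝ (Fin n)) R) :=
  isCompact_iff_compactSpace.mp (isCompact_closedBall _ _)


lemma exp_I_sub_one_abs (t : ℝ) : ‖Complex.exp (Complex.I * t) - 1‖ ≤ |t| := by
  have h : ‖Complex.exp (Complex.I * t) - 1‖ ^ 2 ≤ |t| ^ 2 := by
    rw [Complex.sq_norm]
    have : Complex.exp (Complex.I * t) - 1 = ⟨Real.cos t - 1, Real.sin t⟩ := by
      rw [mul_comm, Complex.exp_mul_I]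
      apply Complex.ext <;> simp [Complex.cos_ofReal_re, Complex.sin_ofReal_re]
    rw [this, Complex.normSq_mk]
    have hc := Real.one_sub_sq_div_two_le_cos (x := t)
    have hs := Real.sin_sq_le_one t
    have hcc := Real.cos_le_one t
    have : Real.sin t ^ 2 = 1 - Real.cos t ^ 2 := by
      rw [Real.sin_sq]
    nlinarith [_root_.sq_abs t, Real.neg_one_le_cos t]
  have h1 : (0:ℝ) ≤ |t| := abs_nonneg t
  nlinarith [norm_nonneg (Complex.exp (Complex.I * t) - 1)]

lemma exp_I_taylor (t : ℝ) :
    ‖Complex.exp (Complex.I * t) - 1 - Complex.I * t‖ ≤ t ^ 2 / 2 := by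
  have hder : ∀ s : ℝ, HasDerivAt (fun s : ℝ => Complex.exp (Complex.I * s) - 1 - Complex.I * s)
      (Complex.I * (Complex.exp (Complex.I * s) - 1)) s := by
    intro s
    have h1 : HasDerivAt (fun s : ℝ => (s : ℂ)) 1 s := Complex.ofRealCLM.hasDerivAt
    have h2 : HasDerivAt (fun s : ℝ => Complex.I * (s : ℂ)) Complex.I s := by
      simpa using h1.const_mul Complex.I
    have h3 : HasDerivAt (fun s : ℝ => Complex.exp (Complex.I * s))
        (Complex.exp (Complex.I * s) * Complex.I) s := h2.cexp
    have := (h3.sub_const 1).sub h2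
    refine this.congr_deriv ?_
    ring
  have hftc : Complex.exp (Complex.I * t) - 1 - Complex.I * t =
      ∫ s in (0:ℝ)..t, Complex.I * (Complex.exp (Complex.I * s) - 1) := by
    have := intervalIntegral.integral_eq_sub_of_hasDerivAt (a := 0) (b := t)
      (f := fun s : ℝ => Complex.exp (Complex.I * s) - 1 - Complex.I * s)
      (fun s _ => hder s)
      (Continuous.intervalIntegrable (by continuity) 0 t)
    rw [this]; simp
  rw [hftc]
  have hb : ‖∫ s in (0:ℝ)..t, Complex.I * (Complex.exp (Complex.I * s) - 1)‖ ≤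
      |(∫ s in (0:ℝ)..t, |s|)| := by
    apply intervalIntegral.norm_integral_le_abs_of_norm_le
    · refine ae_of_all _ fun s => ?_
      rw [norm_mul, Complex.norm_I, one_mul]
      exact exp_I_sub_one_abs s
    · exact Continuous.intervalIntegrable (by continuity) 0 t
  refine hb.trans ?_
  have : (∫ s in (0:ℝ)..t, |s|) = t * |t| / 2 := by
    rcases le_or_gt 0 t with ht | ht
    · rw [abs_of_nonneg ht]
      rw [intervalIntegral.integral_congr (g := fun s => s) ?_]
      · simp [integral_id]; ring
      · intro s hs
        rw [Set.uIcc_of_le (by linarith)] at hs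
        exact abs_of_nonneg hs.1
    · rw [abs_of_neg ht]
      rw [intervalIntegral.integral_congr (g := fun s => -s) ?_]
      · rw [intervalIntegral.integral_neg]; simp [integral_id]; ring
      · intro s hs
        rw [Set.uIcc_of_ge (by linarith)] at hs
        exact abs_of_nonpos hs.2
  rw [this, abs_div, abs_mul, _root_.abs_abs, abs_two, ← _root_.sq_abs t, sq]

/-- Low-wavenumber asymptotics of the total field: if `u` solves the
Lippmann–Schwinger fixed-point equation `u = v + k² T u` with incident plane wave
`v(x) = e^{ik⟨θ,x⟩}`, `‖T‖ ≤ M` and `k² M ≤ 1/2`, then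
`|u(x) - (1 + ik θ·x)| ≤ (R²/2 + 2M) k²` on the closed ball of radius `R`. -/
theorem total_field_low_wavenumber (n : ℕ) (hn : 1 ≤ n) (R : ℝ) (hR : 0 < R)
    (M : ℝ) (hM : 0 ≤ M) (θ : EuclideanSpace ℝ (Fin n)) (hθ : ‖θ‖ = 1)
    (T : C(Metric.closedBall (0 : EuclideanSpace ℝ (Fin n)) R, ℂ) →L[ℂ]
         C(Metric.closedBall (0 : EuclideanSpace ℝ (Fin n)) R, ℂ))
    (hT : ‖T‖ ≤ M) (k : ℝ) (hk : 0 < k) (hkM : k ^ 2 * M ≤ 1 / 2)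
    (v u : C(Metric.closedBall (0 : EuclideanSpace ℝ (Fin n)) R, ℂ))
    (hv : ∀ x, v x = Complex.exp (Complex.I * (k : ℂ) *
      ((inner ℝ θ (x : EuclideanSpace ℝ (Fin n)) : ℝ) : ℂ)))
    (hu : u = v + ((k : ℂ) ^ 2) • T u) :
    ∀ x, ‖u x - (1 + Complex.I * (k : ℂ) *
        ((inner ℝ θ (x : EuclideanSpace ℝ (Fin n)) : ℝ) : ℂ))‖ ≤
      (R ^ 2 / 2 + 2 * M) * k ^ 2 := by
  have hknorm : ‖((k : ℂ) ^ 2)‖ = k ^ 2 := by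
    rw [norm_pow, Complex.norm_real, Real.norm_eq_abs, _root_.sq_abs]
  have hv1 : ‖v‖ ≤ 1 := by
    refine (ContinuousMap.norm_le _ zero_le_one).mpr fun y => ?_
    rw [hv y, Complex.norm_exp]
    have : (Complex.I * (k : ℂ) *
        ((inner ℝ θ (y : EuclideanSpace ℝ (Fin n)) : ℝ) : ℂ)).re = 0 := by simp
    rw [this, Real.exp_zero]
  have hTu : ‖T u‖ ≤ M * ‖u‖ :=
    (T.le_opNorm u).trans (mul_le_mul_of_nonneg_right hT (norm_nonneg u))
  have h1 : ‖u‖ ≤ ‖v‖ + k ^ 2 * (M * ‖u‖) := by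
    calc ‖u‖ = ‖v + ((k : ℂ) ^ 2) • T u‖ := by rw [← hu]
      _ ≤ ‖v‖ + ‖((k : ℂ) ^ 2) • T u‖ := norm_add_le _ _
      _ ≤ ‖v‖ + k ^ 2 * (M * ‖u‖) := by
          rw [norm_smul, hknorm]
          gcongr
  have hu2 : ‖u‖ ≤ 2 := by nlinarith [norm_nonneg u]
  intro x
  set s : ℝ := inner ℝ θ (x : EuclideanSpace ℝ (Fin n)) with hs
  have hsR : |s| ≤ R := by
    have h2 := abs_real_inner_le_norm θ (x : EuclideanSpace ℝ (Fin n))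
    have h3 : ‖(x : EuclideanSpace ℝ (Fin n))‖ ≤ R := by
      have := x.2
      rwa [Metric.mem_closedBall, dist_zero_right] at this
    calc |s| ≤ ‖θ‖ * ‖(x : EuclideanSpace ℝ (Fin n))‖ := h2
      _ = ‖(x : EuclideanSpace ℝ (Fin n))‖ := by rw [hθ, one_mul]
      _ ≤ R := h3
  have hux : u x = v x + (k : ℂ) ^ 2 * (T u) x := by
    conv_lhs => rw [hu]
    simp
  have hcast : Complex.I * (k : ℂ) * (s : ℂ) = Complex.I * ((k * s : ℝ) : ℂ) := by
    push_cast; ring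
  have key := exp_I_taylor (k * s)
  have hTux : ‖(T u) x‖ ≤ M * 2 :=
    (ContinuousMap.norm_coe_le_norm (T u) x).trans
      (hTu.trans (mul_le_mul_of_nonneg_left hu2 hM))
  calc ‖u x - (1 + Complex.I * (k : ℂ) * (s : ℂ))‖
      = ‖(v x - (1 + Complex.I * (k : ℂ) * (s : ℂ))) + (k : ℂ) ^ 2 * (T u) x‖ := by
        rw [hux]; ring_nf
    _ ≤ ‖v x - (1 + Complex.I * (k : ℂ) * (s : ℂ))‖ + ‖(k : ℂ) ^ 2 * (T u) x‖ :=
        norm_add_le _ _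
    _ ≤ (k * s) ^ 2 / 2 + k ^ 2 * (M * 2) := by
        gcongr
        · rw [hv x, ← hs, hcast]
          calc ‖Complex.exp (Complex.I * ((k * s : ℝ) : ℂ)) -
                (1 + Complex.I * ((k * s : ℝ) : ℂ))‖
              = ‖Complex.exp (Complex.I * ((k * s : ℝ) : ℂ)) - 1 -
                Complex.I * ((k * s : ℝ) : ℂ)‖ := by ring_nf
            _ ≤ (k * s) ^ 2 / 2 := key
        · rw [norm_mul, hknorm]
          exact mul_le_mul_of_nonneg_left hTux (sq_nonneg k)
    _ ≤ (R ^ 2 / 2 + 2 * M) * k ^ 2 := by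
        have hs2 : s ^ 2 ≤ R ^ 2 := by nlinarith [_root_.sq_abs s, abs_nonneg s]
        nlinarith [sq_nonneg k, hs2]
end

section
/- Let q : ℝ^3 → ℂ be continuous and integrable, and assume its Fourier transform q̂ is integrable and satisfies ∫_{ℝ^3} (1+‖ξ‖^2)^2 |q̂(ξ)|^2 dξ < ∞. With ‖q‖_{H^2} := (2π)^{-3} ( ∫_{ℝ^3} (1+‖ξ‖^2)^2 |q̂(ξ)|^2 dξ )^{1/2} and ‖q‖_{L^2} := (2π)^{-3} ( ∫_{ℝ^3} |q̂(ξ)|^2 dξ )^{1/2}, for every z ∈ ℝ^3 and all 0 < k_min ≤ k_max, | q(z) − (2π)^{-3} ∫_{k_min ≤ ‖ξ‖ ≤ k_max} q̂(ξ) e^{i⟨z,ξ⟩} dξ | ≤ 2√π ( k_max^{-1/2} ‖q‖_{H^2} + (√3/3) k_min^{3/2} ‖q‖_{L^2} ). In particular the truncated indicator I^∞_K satisfies |I^∞_K(z) − q(z)| = O(k_max^{-1/2}) + O(k_min^{3/2}). -/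
set_option maxHeartbeats 1000000

open MeasureTheory Real Set FourierTransform

local notation "V3" => EuclideanSpace ℝ (Fin 3)

-- Cauchy-Schwarz for integrals
lemma myCS {α : Type*} [MeasurableSpace α] {μ : Measure α} {f g : α → ℝ}
    (hf0 : ∀ x, 0 ≤ f x) (hg0 : ∀ x, 0 ≤ g x)
    (hfm : AEStronglyMeasurable f μ) (hgm : AEStronglyMeasurable g μ)
    (hf2 : Integrable (fun x => f x ^ 2) μ) (hg2 : Integrable (fun x => g x ^ 2) μ) :
    ∫ x, f x * g x ∂μ ≤ Real.sqrt (∫ x, f x ^ 2 ∂μ) * Real.sqrt (∫ x, g x ^ 2 ∂μ) := by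
  have h22 : (2:ℝ).HolderConjugate 2 := Real.holderConjugate_iff.2 ⟨one_lt_two, by norm_num⟩
  have hf : MemLp f (ENNReal.ofReal 2) μ := by
    rw [show ENNReal.ofReal (2:ℝ) = 2 by simp]
    exact (memLp_two_iff_integrable_sq hfm).2 hf2
  have hg : MemLp g (ENNReal.ofReal 2) μ := by
    rw [show ENNReal.ofReal (2:ℝ) = 2 by simp]
    exact (memLp_two_iff_integrable_sq hgm).2 hg2
  have := integral_mul_le_Lp_mul_Lq_of_nonneg h22 (ae_of_all μ hf0) (ae_of_all μ hg0) hf hg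
  simpa [Real.sqrt_eq_rpow] using this

lemma sqrt_inner_const {k : ℝ} (hk : 0 < k) :
    Real.sqrt (π * (4/3) * k ^ 3) = 2 * Real.sqrt π * (Real.sqrt 3 / 3) * k ^ ((3:ℝ)/2) := by
  have h3 : Real.sqrt 3 ^ 2 = 3 := Real.sq_sqrt (by norm_num)
  have hπ' : Real.sqrt π ^ 2 = π := Real.sq_sqrt Real.pi_nonneg
  have hk' : (k ^ ((3:ℝ)/2)) ^ 2 = k ^ 3 := by
    rw [← Real.rpow_natCast (k ^ ((3:ℝ)/2)) 2, ← Real.rpow_mul hk.le,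
      show ((3:ℝ)/2 * ((2:ℕ):ℝ)) = ((3:ℕ):ℝ) by norm_num, Real.rpow_natCast]
  have hpos : 0 ≤ 2 * Real.sqrt π * (Real.sqrt 3 / 3) * k ^ ((3:ℝ)/2) := by positivity
  have key : (2 * Real.sqrt π * (Real.sqrt 3 / 3) * k ^ ((3:ℝ)/2)) ^ 2 = π * (4/3) * k ^ 3 := by
    rw [mul_pow, mul_pow, mul_pow, div_pow, h3, hπ', hk']; ring
  rw [← key, Real.sqrt_sq hpos]

lemma sqrt_outer_const {k : ℝ} (hk : 0 < k) :
    Real.sqrt (4 * π / k) = 2 * Real.sqrt π * k ^ (-(1:ℝ)/2) := by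
  have hπ' : Real.sqrt π ^ 2 = π := Real.sq_sqrt Real.pi_nonneg
  have hk' : (k ^ (-(1:ℝ)/2)) ^ 2 = k⁻¹ := by
    rw [← Real.rpow_natCast (k ^ (-(1:ℝ)/2)) 2, ← Real.rpow_mul hk.le,
      show (-(1:ℝ)/2 * ((2:ℕ):ℝ)) = (-1:ℝ) by norm_num, Real.rpow_neg_one]
  have hpos : 0 ≤ 2 * Real.sqrt π * k ^ (-(1:ℝ)/2) := by positivity
  have key : (2 * Real.sqrt π * k ^ (-(1:ℝ)/2)) ^ 2 = 4 * π / k := by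
    rw [mul_pow, mul_pow, hπ', hk']; ring
  rw [← key, Real.sqrt_sq hpos]

lemma volume_ball_3 {r : ℝ} (hr : 0 ≤ r) :
    (volume (Metric.ball (0 : EuclideanSpace ℝ (Fin 3)) r)).toReal = π * (4/3) * r ^ 3 := by
  rw [EuclideanSpace.volume_ball, Fintype.card_fin]
  have hG : Real.Gamma ((3:ℕ)/2 + 1) = 3/4 * Real.sqrt π := by
    rw [show ((3:ℕ):ℝ)/2 + 1 = (1/2 + 1) + 1 by norm_num,
      Real.Gamma_add_one (by norm_num), Real.Gamma_add_one (by norm_num),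
      Real.Gamma_one_half_eq]
    ring
  rw [hG]
  have hsπ : 0 < Real.sqrt π := Real.sqrt_pos.2 Real.pi_pos
  have h1 : Real.sqrt π ^ 3 / (3/4 * Real.sqrt π) = π * (4/3) := by
    rw [show Real.sqrt π ^ 3 = π * Real.sqrt π by
      rw [pow_succ, Real.sq_sqrt Real.pi_nonneg]]
    field_simp
  rw [h1, ENNReal.toReal_mul, ENNReal.toReal_pow, ENNReal.toReal_ofReal hr,
    ENNReal.toReal_ofReal (by positivity)]
  ring

lemma outer_integral_bound {k : ℝ} (hk : 0 < k) :
    ∫ ξ : EuclideanSpace ℝ (Fin 3) in {ξ | k < ‖ξ‖}, ((1 + ‖ξ‖^2)⁻¹)^2 ≤ 4 * π / k := by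
  set f : ℝ → ℝ := (Set.Ioi k).indicator (fun r => ((1 + r^2)⁻¹)^2) with hf
  have hmeas : MeasurableSet {ξ : EuclideanSpace ℝ (Fin 3) | k < ‖ξ‖} :=
    measurableSet_lt measurable_const measurable_norm
  have h1 : ∫ ξ : EuclideanSpace ℝ (Fin 3) in {ξ | k < ‖ξ‖}, ((1 + ‖ξ‖^2)⁻¹)^2
      = ∫ ξ : EuclideanSpace ℝ (Fin 3), f ‖ξ‖ := by
    rw [← integral_indicator hmeas]
    congr 1
  have h2 : ∫ ξ : EuclideanSpace ℝ (Fin 3), f ‖ξ‖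
      = 3 * ((volume (Metric.ball (0 : EuclideanSpace ℝ (Fin 3)) 1)).toReal
        * ∫ y in Set.Ioi (0:ℝ), y ^ 2 • f y) := by
    rw [MeasureTheory.integral_fun_norm_addHaar volume f]
    simp [finrank_euclideanSpace_fin, nsmul_eq_mul, smul_eq_mul]
    left
    rw [measureReal_def, volume_ball_3 zero_le_one, ENNReal.toReal_ofReal (by positivity)]; ring
  have h3 : ∫ y in Set.Ioi (0:ℝ), y ^ 2 • f y
      = ∫ y in Set.Ioi k, y ^ 2 * ((1 + y^2)⁻¹)^2 := by
    rw [show (fun y : ℝ => y ^ 2 • f y)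
        = (Set.Ioi k).indicator (fun y => y ^ 2 * ((1 + y^2)⁻¹)^2) from by
      ext y
      by_cases hy : y ∈ Set.Ioi k <;>
        simp [hf, Set.indicator_of_mem, Set.indicator_of_notMem, hy, smul_eq_mul]]
    rw [setIntegral_indicator measurableSet_Ioi,
      Set.inter_eq_self_of_subset_right (Set.Ioi_subset_Ioi hk.le)]
  have h4 : ∫ y in Set.Ioi k, y ^ 2 * ((1 + y^2)⁻¹)^2 ≤ ∫ y in Set.Ioi k, y ^ (-2:ℝ) := by
    apply integral_mono_of_nonneg
    · filter_upwards with y; positivity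
    · exact integrableOn_Ioi_rpow_of_lt (by norm_num) hk
    · filter_upwards [ae_restrict_mem measurableSet_Ioi] with y hy
      have hy0 : 0 < y := hk.trans hy
      rw [show (-2:ℝ) = -((2:ℕ):ℝ) by norm_num, Real.rpow_neg hy0.le, Real.rpow_natCast,
        inv_pow, ← div_eq_mul_inv, div_le_iff₀ (by positivity), inv_mul_eq_div,
        le_div_iff₀ (by positivity)]
      nlinarith [sq_nonneg y, sq_nonneg (y^2)]
  have h5 : ∫ y in Set.Ioi k, y ^ (-2:ℝ) = k⁻¹ := by
    rw [integral_Ioi_rpow_of_lt (by norm_num) hk]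
    norm_num [Real.rpow_neg_one]
  have hvol : (volume (Metric.ball (0 : EuclideanSpace ℝ (Fin 3)) 1)).toReal = π * (4/3) := by
    rw [volume_ball_3 (by norm_num)]; norm_num
  rw [h1, h2, h3, hvol]
  calc 3 * (π * (4/3) * ∫ y in Set.Ioi k, y ^ 2 * ((1 + y^2)⁻¹)^2)
      ≤ 3 * (π * (4/3) * k⁻¹) := by
        apply mul_le_mul_of_nonneg_left _ (by norm_num)
        apply mul_le_mul_of_nonneg_left _ (by positivity)
        exact h4.trans h5.le
    _ = 4 * π / k := by field_simp

lemma inversion_step (q : V3 → ℂ) (hq_cont : Continuous q) (hq_int : Integrable q)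
    (hqhat_int : Integrable (fun ξ : V3 =>
      ∫ y, q y * Complex.exp (-(Complex.I * ((inner ℝ ξ y : ℝ) : ℂ))))) (z : V3) :
    q z = ((2 * π) ^ 3 : ℝ)⁻¹ • ∫ ξ : V3,
      (∫ y, q y * Complex.exp (-(Complex.I * ((inner ℝ ξ y : ℝ) : ℂ)))) *
        Complex.exp (Complex.I * ((inner ℝ z ξ : ℝ) : ℂ)) := by
  have h2π : (2 * π) ≠ 0 := by positivity
  set F : V3 → ℂ := fun ξ => ∫ y, q y * Complex.exp (-(Complex.I * ((inner ℝ ξ y : ℝ) : ℂ)))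
    with hFdef
  have hFeq : ∀ ξ : V3, F ξ = 𝓕 q ((2 * π)⁻¹ • ξ) := by
    intro ξ
    rw [Real.fourier_eq']
    refine integral_congr_ae (Filter.Eventually.of_forall fun v => ?_)
    dsimp only
    rw [smul_eq_mul, mul_comm]
    congr 1
    rw [real_inner_smul_right,
      show -2 * π * ((2 * π)⁻¹ * (inner ℝ v ξ : ℝ)) = -(inner ℝ v ξ : ℝ) by field_simp]
    congr 1
    rw [real_inner_comm ξ v]
    push_cast
    ring
  have hG : 𝓕 q = fun w => F ((2 * π) • w) := by
    ext w
    rw [hFeq, smul_smul, inv_mul_cancel₀ h2π, one_smul]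
  have hGi : Integrable (𝓕 q) := by
    rw [hG]; exact hqhat_int.comp_smul h2π
  have hinv : 𝓕⁻ (𝓕 q) z = q z := by
    rw [hq_cont.fourierInv_fourier_eq hq_int hGi]
  rw [← hinv, Real.fourierInv_eq']
  have hcs : ∫ ξ : V3, (fun w : V3 => Complex.exp (((2 * π * (inner ℝ w z : ℝ) : ℝ) : ℂ)
        * Complex.I) • 𝓕 q w) ((2 * π)⁻¹ • ξ)
      = (2 * π) ^ Module.finrank ℝ V3 • ∫ w : V3,
        Complex.exp (((2 * π * (inner ℝ w z : ℝ) : ℝ) : ℂ) * Complex.I) • 𝓕 q w :=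
    MeasureTheory.Measure.integral_comp_inv_smul_of_nonneg volume
      (fun w : V3 => Complex.exp (((2 * π * (inner ℝ w z : ℝ) : ℝ) : ℂ) * Complex.I) • 𝓕 q w)
      (R := 2 * π) (by positivity)
  rw [finrank_euclideanSpace_fin] at hcs
  have hptwise : ∀ ξ : V3, (fun w : V3 => Complex.exp (((2 * π * (inner ℝ w z : ℝ) : ℝ) : ℂ)
        * Complex.I) • 𝓕 q w) ((2 * π)⁻¹ • ξ)
      = F ξ * Complex.exp (Complex.I * ((inner ℝ z ξ : ℝ) : ℂ)) := by
    intro ξ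
    simp only
    rw [← hFeq, smul_eq_mul, mul_comm]
    congr 1
    rw [real_inner_smul_left,
      show 2 * π * ((2 * π)⁻¹ * (inner ℝ ξ z : ℝ)) = (inner ℝ ξ z : ℝ) by field_simp]
    congr 1
    rw [real_inner_comm ξ z]
    push_cast
    ring
  have h2πpow : ((2 * π) ^ 3 : ℝ) ≠ 0 := by positivity
  rw [show (∫ w : V3, Complex.exp (((2 * π * (inner ℝ w z : ℝ) : ℝ) : ℂ) * Complex.I) • 𝓕 q w)
      = ((2 * π) ^ 3 : ℝ)⁻¹ • ∫ ξ : V3, F ξ * Complex.exp (Complex.I * ((inner ℝ z ξ : ℝ) : ℂ))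
      from by
    rw [show (∫ ξ : V3, F ξ * Complex.exp (Complex.I * ((inner ℝ z ξ : ℝ) : ℂ)))
        = ∫ ξ : V3, (fun w : V3 => Complex.exp (((2 * π * (inner ℝ w z : ℝ) : ℝ) : ℂ)
          * Complex.I) • 𝓕 q w) ((2 * π)⁻¹ • ξ) from
      integral_congr_ae (Filter.Eventually.of_forall fun ξ => (hptwise ξ).symm)]
    rw [hcs, smul_smul, inv_mul_cancel₀ h2πpow, one_smul]]

/-- 3D resolution bound for the truncated far-field indicator:
`|q(z) - (2π)^{-3} ∫_{kmin ≤ ‖ξ‖ ≤ kmax} q̂(ξ) e^{i⟨z,ξ⟩} dξ|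
  ≤ 2√π (kmax^{-1/2} ‖q‖_{H²} + (√3/3) kmin^{3/2} ‖q‖_{L²})`,
where `q̂(ξ) = ∫ q(y) e^{-i⟨ξ,y⟩} dy`. -/
theorem resolution_bound_3D (q : EuclideanSpace ℝ (Fin 3) → ℂ)
    (hq_cont : Continuous q) (hq_int : Integrable q)
    (hqhat_int : Integrable (fun ξ : EuclideanSpace ℝ (Fin 3) =>
      ∫ y, q y * Complex.exp (-(Complex.I * ((inner ℝ ξ y : ℝ) : ℂ)))))
    (hH2 : Integrable (fun ξ : EuclideanSpace ℝ (Fin 3) => (1 + ‖ξ‖ ^ 2) ^ 2 *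
      ‖∫ y, q y * Complex.exp (-(Complex.I * ((inner ℝ ξ y : ℝ) : ℂ)))‖ ^ 2))
    (z : EuclideanSpace ℝ (Fin 3)) (kmin kmax : ℝ) (hkmin : 0 < kmin) (hk : kmin ≤ kmax) :
    ‖q z - ((2 * Real.pi : ℂ) ^ 3)⁻¹ *
        (∫ ξ in {ξ : EuclideanSpace ℝ (Fin 3) | kmin ≤ ‖ξ‖ ∧ ‖ξ‖ ≤ kmax},
          (∫ y, q y * Complex.exp (-(Complex.I * ((inner ℝ ξ y : ℝ) : ℂ)))) *
            Complex.exp (Complex.I * ((inner ℝ z ξ : ℝ) : ℂ)))‖ ≤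
      2 * Real.sqrt Real.pi *
        (kmax ^ (-(1 : ℝ) / 2) * (((2 * Real.pi) ^ 3)⁻¹ *
            Real.sqrt (∫ ξ, (1 + ‖ξ‖ ^ 2) ^ 2 *
              ‖∫ y, q y * Complex.exp (-(Complex.I * ((inner ℝ ξ y : ℝ) : ℂ)))‖ ^ 2)) +
          Real.sqrt 3 / 3 * kmin ^ ((3 : ℝ) / 2) *
            (((2 * Real.pi) ^ 3)⁻¹ * Real.sqrt (∫ ξ,
              ‖∫ y, q y * Complex.exp (-(Complex.I * ((inner ℝ ξ y : ℝ) : ℂ)))‖ ^ 2))) := by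
  have h2π : (0:ℝ) < 2 * π := by positivity
  have hkmax : (0:ℝ) < kmax := lt_of_lt_of_le hkmin hk
  set F : V3 → ℂ := fun ξ => ∫ y, q y * Complex.exp (-(Complex.I * ((inner ℝ ξ y : ℝ) : ℂ)))
    with hFdef
  set G : V3 → ℂ := fun ξ => F ξ * Complex.exp (Complex.I * ((inner ℝ z ξ : ℝ) : ℂ)) with hGdef
  have hFm : AEStronglyMeasurable F volume := hqhat_int.1
  have hexp_norm : ∀ ξ : V3, ‖Complex.exp (Complex.I * ((inner ℝ z ξ : ℝ) : ℂ))‖ = 1 := fun ξ => by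
    rw [mul_comm]; exact Complex.norm_exp_ofReal_mul_I _
  have hexp_meas : AEStronglyMeasurable
      (fun ξ : V3 => Complex.exp (Complex.I * ((inner ℝ z ξ : ℝ) : ℂ))) volume := by
    refine Continuous.aestronglyMeasurable ?_
    exact Complex.continuous_exp.comp (continuous_const.mul
      (Complex.continuous_ofReal.comp (Continuous.inner continuous_const continuous_id)))
  have hGint : Integrable G := by
    have h := Integrable.bdd_mul (c := 1) hqhat_int hexp_meas (Filter.Eventually.of_forall fun ξ => (hexp_norm ξ).le)
    exact h.congr (Filter.Eventually.of_forall fun ξ => mul_comm _ _)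
  have hGnorm : ∀ ξ : V3, ‖G ξ‖ = ‖F ξ‖ := fun ξ => by
    rw [hGdef]; simp only [norm_mul, hexp_norm ξ, mul_one]
  -- L2 integrability
  have hL2 : Integrable (fun ξ : V3 => ‖F ξ‖ ^ 2) := by
    refine hH2.mono' ((hFm.norm.mul hFm.norm).congr
      (Filter.Eventually.of_forall fun ξ => (pow_two _).symm))
      (Filter.Eventually.of_forall fun ξ => ?_)
    have h1 : (1:ℝ) ≤ (1 + ‖ξ‖ ^ 2) ^ 2 := by nlinarith [sq_nonneg ‖ξ‖]
    rw [Real.norm_eq_abs, abs_of_nonneg (by positivity)]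
    nlinarith [sq_nonneg ‖F ξ‖]
  have hH2' : Integrable (fun ξ : V3 => ((1 + ‖ξ‖ ^ 2) * ‖F ξ‖) ^ 2) :=
    hH2.congr (Filter.Eventually.of_forall fun ξ => (mul_pow _ _ _).symm)
  -- sets
  set T : Set V3 := {ξ : V3 | kmin ≤ ‖ξ‖ ∧ ‖ξ‖ ≤ kmax} with hTdef
  set S1 : Set V3 := {ξ : V3 | ‖ξ‖ < kmin} with hS1def
  set S2 : Set V3 := {ξ : V3 | kmax < ‖ξ‖} with hS2def
  have hT : MeasurableSet T :=
    (measurableSet_le measurable_const measurable_norm).inter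
      (measurableSet_le measurable_norm measurable_const)
  have hS1 : MeasurableSet S1 := measurableSet_lt measurable_norm measurable_const
  have hS2 : MeasurableSet S2 := measurableSet_lt measurable_const measurable_norm
  have hcompl : Tᶜ = S1 ∪ S2 := by
    ext ξ; simp only [hTdef, hS1def, hS2def, Set.mem_compl_iff, Set.mem_setOf_eq,
      Set.mem_union, not_and_or, not_le]
  have hdisj : Disjoint S1 S2 := by
    rw [Set.disjoint_left]
    intro ξ h1 h2
    rw [hS1def, Set.mem_setOf_eq] at h1
    rw [hS2def, Set.mem_setOf_eq] at h2
    linarith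
  have hS1ball : S1 = Metric.ball (0 : V3) kmin := by
    ext ξ; simp [hS1def, mem_ball_zero_iff]
  have hS1vol : volume S1 < ⊤ := by
    rw [hS1ball]; exact measure_ball_lt_top
  -- main identity
  have hqz := inversion_step q hq_cont hq_int hqhat_int z
  have hsplit : (∫ ξ in T, G ξ) + ∫ ξ in Tᶜ, G ξ = ∫ ξ, G ξ := integral_add_compl hT hGint
  have key : q z - ((2 * (π:ℂ)) ^ 3)⁻¹ * ∫ ξ in T, G ξ
      = ((2 * (π:ℂ)) ^ 3)⁻¹ * ∫ ξ in Tᶜ, G ξ := by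
    rw [hqz, Complex.real_smul, ← hsplit]
    push_cast
    ring
  rw [key]
  -- norm bound
  have hCnorm : ‖(((2 * (π:ℂ)) ^ 3)⁻¹ : ℂ)‖ = (((2 * π) ^ 3 : ℝ))⁻¹ := by
    rw [show ((2 * (π:ℂ))) = (((2 * π : ℝ)) : ℂ) by push_cast; ring,
      norm_inv, norm_pow, Complex.norm_real, Real.norm_eq_abs, abs_of_pos h2π]
  have hintS1 : IntegrableOn (fun ξ : V3 => ‖F ξ‖) S1 := hqhat_int.norm.integrableOn
  have hintS2 : IntegrableOn (fun ξ : V3 => ‖F ξ‖) S2 := hqhat_int.norm.integrableOn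
  have step1 : ‖∫ ξ in Tᶜ, G ξ‖ ≤ (∫ ξ in S1, ‖F ξ‖) + ∫ ξ in S2, ‖F ξ‖ := by
    calc ‖∫ ξ in Tᶜ, G ξ‖ ≤ ∫ ξ in Tᶜ, ‖G ξ‖ := norm_integral_le_integral_norm _
      _ = ∫ ξ in Tᶜ, ‖F ξ‖ :=
        integral_congr_ae (Filter.Eventually.of_forall fun ξ => hGnorm ξ)
      _ = (∫ ξ in S1, ‖F ξ‖) + ∫ ξ in S2, ‖F ξ‖ := by
        rw [hcompl, setIntegral_union hdisj hS2 hintS1 hintS2]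
  -- abbreviations
  set a : ℝ := Real.sqrt (∫ ξ : V3, ‖F ξ‖ ^ 2) with hadef
  set b : ℝ := Real.sqrt (∫ ξ : V3, (1 + ‖ξ‖ ^ 2) ^ 2 * ‖F ξ‖ ^ 2) with hbdef
  have ha0 : 0 ≤ a := Real.sqrt_nonneg _
  have hb0 : 0 ≤ b := Real.sqrt_nonneg _
  -- inner ball bound
  have bound1 : (∫ ξ in S1, ‖F ξ‖) ≤ 2 * Real.sqrt π * (Real.sqrt 3 / 3) * kmin ^ ((3:ℝ)/2) * a := by
    have hcs := myCS (μ := volume.restrict S1) (f := fun _ : V3 => (1:ℝ))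
      (g := fun ξ : V3 => ‖F ξ‖) (fun _ => zero_le_one) (fun ξ => norm_nonneg _)
      aestronglyMeasurable_const (hFm.norm.restrict)
      (by simp only [one_pow]; exact integrableOn_const hS1vol.ne)
      hL2.integrableOn
    simp only [one_mul, one_pow] at hcs
    have h1 : (∫ _ξ in S1, (1:ℝ)) = (volume S1).toReal := by
      simp [Measure.restrict_apply_univ]; rfl
    have h2 : Real.sqrt ((volume S1).toReal)
        = 2 * Real.sqrt π * (Real.sqrt 3 / 3) * kmin ^ ((3:ℝ)/2) := by
      rw [hS1ball, volume_ball_3 hkmin.le, sqrt_inner_const hkmin]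
    have h3 : Real.sqrt (∫ ξ in S1, ‖F ξ‖ ^ 2) ≤ a := by
      rw [hadef]
      exact Real.sqrt_le_sqrt (setIntegral_le_integral hL2
        (Filter.Eventually.of_forall fun ξ => by positivity))
    calc (∫ ξ in S1, ‖F ξ‖) ≤ Real.sqrt (∫ _ξ in S1, (1:ℝ)) * Real.sqrt (∫ ξ in S1, ‖F ξ‖ ^ 2) :=
          hcs
      _ ≤ Real.sqrt (∫ _ξ in S1, (1:ℝ)) * a :=
          mul_le_mul_of_nonneg_left h3 (Real.sqrt_nonneg _)
      _ = 2 * Real.sqrt π * (Real.sqrt 3 / 3) * kmin ^ ((3:ℝ)/2) * a := by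
          rw [h1, h2]
  -- outer bound
  have hwcont : Continuous (fun ξ : V3 => (1 + ‖ξ‖ ^ 2)⁻¹) :=
    (continuous_const.add ((continuous_norm).pow 2)).inv₀ (fun ξ => (by positivity : (0:ℝ) < 1 + ‖ξ‖ ^ 2).ne')
  have hwint : Integrable (fun ξ : V3 => ((1 + ‖ξ‖ ^ 2)⁻¹) ^ 2) := by
    have h4 : ((Module.finrank ℝ V3 : ℝ)) < 4 := by
      rw [finrank_euclideanSpace_fin]; norm_num
    refine (integrable_rpow_neg_one_add_norm_sq (μ := (volume : Measure V3)) h4).congr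
      (Filter.Eventually.of_forall fun ξ => ?_)
    have h0 : (0:ℝ) < 1 + ‖ξ‖ ^ 2 := by positivity
    dsimp only
    rw [show (-(4:ℝ)/2) = -((2:ℕ):ℝ) by norm_num, Real.rpow_neg h0.le, Real.rpow_natCast,
      inv_pow]
  have bound2 : (∫ ξ in S2, ‖F ξ‖) ≤ 2 * Real.sqrt π * kmax ^ (-(1:ℝ)/2) * b := by
    have hcs : (∫ ξ in S2, (1 + ‖ξ‖ ^ 2)⁻¹ * ((1 + ‖ξ‖ ^ 2) * ‖F ξ‖))
        ≤ Real.sqrt (∫ ξ in S2, ((1 + ‖ξ‖ ^ 2)⁻¹) ^ 2)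
          * Real.sqrt (∫ ξ in S2, ((1 + ‖ξ‖ ^ 2) * ‖F ξ‖) ^ 2) := by
      refine myCS (fun ξ => by positivity) (fun ξ => by positivity)
        hwcont.aestronglyMeasurable.restrict
        (((continuous_const.add ((continuous_norm).pow 2)).aestronglyMeasurable.mul
          hFm.norm).restrict)
        hwint.integrableOn hH2'.integrableOn
    have hptwise : ∀ ξ : V3, (1 + ‖ξ‖ ^ 2)⁻¹ * ((1 + ‖ξ‖ ^ 2) * ‖F ξ‖) = ‖F ξ‖ := fun ξ => by
      have h0 : (1 + ‖ξ‖ ^ 2) ≠ 0 := by positivity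
      field_simp
    have hLHS : (∫ ξ in S2, (1 + ‖ξ‖ ^ 2)⁻¹ * ((1 + ‖ξ‖ ^ 2) * ‖F ξ‖)) = ∫ ξ in S2, ‖F ξ‖ :=
      integral_congr_ae (Filter.Eventually.of_forall fun ξ => hptwise ξ)
    have h5 : Real.sqrt (∫ ξ in S2, ((1 + ‖ξ‖ ^ 2)⁻¹) ^ 2)
        ≤ 2 * Real.sqrt π * kmax ^ (-(1:ℝ)/2) := by
      rw [← sqrt_outer_const hkmax]
      exact Real.sqrt_le_sqrt (outer_integral_bound hkmax)
    have h6 : Real.sqrt (∫ ξ in S2, ((1 + ‖ξ‖ ^ 2) * ‖F ξ‖) ^ 2) ≤ b := by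
      rw [hbdef]
      refine Real.sqrt_le_sqrt ?_
      calc (∫ ξ in S2, ((1 + ‖ξ‖ ^ 2) * ‖F ξ‖) ^ 2)
          ≤ ∫ ξ : V3, ((1 + ‖ξ‖ ^ 2) * ‖F ξ‖) ^ 2 :=
            setIntegral_le_integral hH2' (Filter.Eventually.of_forall fun ξ => by positivity)
        _ = ∫ ξ : V3, (1 + ‖ξ‖ ^ 2) ^ 2 * ‖F ξ‖ ^ 2 :=
            integral_congr_ae (Filter.Eventually.of_forall fun ξ => mul_pow _ _ _)
    calc (∫ ξ in S2, ‖F ξ‖)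
        = ∫ ξ in S2, (1 + ‖ξ‖ ^ 2)⁻¹ * ((1 + ‖ξ‖ ^ 2) * ‖F ξ‖) := hLHS.symm
      _ ≤ Real.sqrt (∫ ξ in S2, ((1 + ‖ξ‖ ^ 2)⁻¹) ^ 2)
          * Real.sqrt (∫ ξ in S2, ((1 + ‖ξ‖ ^ 2) * ‖F ξ‖) ^ 2) := hcs
      _ ≤ (2 * Real.sqrt π * kmax ^ (-(1:ℝ)/2)) * b := by
          apply mul_le_mul h5 h6 (Real.sqrt_nonneg _)
          positivity
  -- final
  have hC0 : (0:ℝ) ≤ (((2 * π) ^ 3 : ℝ))⁻¹ := by positivity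
  calc ‖(((2 * (π:ℂ)) ^ 3)⁻¹ : ℂ) * ∫ ξ in Tᶜ, G ξ‖
      = (((2 * π) ^ 3 : ℝ))⁻¹ * ‖∫ ξ in Tᶜ, G ξ‖ := by rw [norm_mul, hCnorm]
    _ ≤ (((2 * π) ^ 3 : ℝ))⁻¹ * ((2 * Real.sqrt π * (Real.sqrt 3 / 3) * kmin ^ ((3:ℝ)/2) * a)
        + 2 * Real.sqrt π * kmax ^ (-(1:ℝ)/2) * b) := by
        apply mul_le_mul_of_nonneg_left _ hC0
        exact step1.trans (add_le_add bound1 bound2)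
    _ = 2 * Real.sqrt π * (kmax ^ (-(1:ℝ)/2) * ((((2 * π) ^ 3 : ℝ))⁻¹ * b)
        + Real.sqrt 3 / 3 * kmin ^ ((3:ℝ)/2) * ((((2 * π) ^ 3 : ℝ))⁻¹ * a)) := by ring
end
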